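/- For every δ > 0, the integral over the two-dimensional Euclidean ball of radius δ centered at the origin, ∫_{‖y‖ < δ} ( −1 / (2π · log(α) · (‖y‖² + α²)) ) dy (with respect to two-dimensional Lebesgue measure), tends to 1 as α tends to 0 from within (0,1). (This is the two-dimensional form of Case II of the paper's kernel-relaxation lemma: the kernel integral over a small planar disk around the touching point tends to 1.) -/

import Mathlib

open MeasureTheory Filter Real

/-- Explicit value of the kernel integral over the planar disk for `α ∈ (0,1)`. -/
lemma kernel_disk_integral_eq (δ α : ℝ) (hδ : 0 < δ) (hα : α ∈ Set.Ioo (0:ℝ) 1) :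
    ∫ y in Metric.ball (0 : EuclideanSpace ℝ (Fin 2)) δ,
        -1 / (2 * Real.pi * Real.log α * (‖y‖ ^ 2 + α ^ 2)) =
      1 - Real.log (δ ^ 2 + α ^ 2) / (2 * Real.log α) := by
  obtain ⟨hα0, hα1⟩ := hα
  have hlogα : Real.log α < 0 := Real.log_neg hα0 hα1
  have hpos : ∀ r : ℝ, 0 < r ^ 2 + α ^ 2 := fun r =>
    add_pos_of_nonneg_of_pos (sq_nonneg r) (pow_pos hα0 2)
  -- rewrite the integrand as a constant times 1/(‖y‖² + α²)
  have hsplit : ∀ y : EuclideanSpace ℝ (Fin 2),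
      -1 / (2 * Real.pi * Real.log α * (‖y‖ ^ 2 + α ^ 2)) =
        (-1 / (2 * Real.pi * Real.log α)) * (1 / (‖y‖ ^ 2 + α ^ 2)) := by
    intro y; rw [div_mul_div_comm]; ring_nf
  simp_rw [hsplit]
  rw [integral_const_mul]
  -- radial reduction
  have hradial : ∫ y in Metric.ball (0 : EuclideanSpace ℝ (Fin 2)) δ,
      (1 : ℝ) / (‖y‖ ^ 2 + α ^ 2) =
      2 * π * ∫ r in Set.Ioo (0:ℝ) δ, r / (r ^ 2 + α ^ 2) := by
    set g : ℝ → ℝ := Set.indicator (Set.Iio δ) (fun r => 1 / (r ^ 2 + α ^ 2)) with hg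
    have h1 : ∫ y in Metric.ball (0 : EuclideanSpace ℝ (Fin 2)) δ,
        (1 : ℝ) / (‖y‖ ^ 2 + α ^ 2) = ∫ y : EuclideanSpace ℝ (Fin 2), g ‖y‖ := by
      rw [← integral_indicator measurableSet_ball]
      congr 1 with y
      by_cases hy : ‖y‖ < δ <;>
        simp [hg, Set.indicator_apply, Metric.mem_ball, dist_zero_right, hy]
    rw [h1, integral_fun_norm_addHaar volume g]
    have hdim : Module.finrank ℝ (EuclideanSpace ℝ (Fin 2)) = 2 := by
      simp [finrank_euclideanSpace]
    rw [hdim]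
    have hvol : (volume (Metric.ball (0 : EuclideanSpace ℝ (Fin 2)) 1)).toReal = π := by
      rw [EuclideanSpace.volume_ball]
      norm_num [Real.Gamma_two, Real.sq_sqrt Real.pi_nonneg, Real.pi_nonneg]
    rw [measureReal_def, hvol]
    have h2 : ∫ r in Set.Ioi (0:ℝ), r ^ (2-1) • g r =
        ∫ r in Set.Ioo (0:ℝ) δ, r / (r ^ 2 + α ^ 2) := by
      have : ∀ r : ℝ, r ^ (2-1) • g r =
          Set.indicator (Set.Iio δ) (fun r => r / (r ^ 2 + α ^ 2)) r := by
        intro r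
        simp only [hg, pow_one, smul_eq_mul, Set.indicator_apply]
        split_ifs <;> simp [div_eq_mul_inv, mul_one_div]
      simp_rw [this]
      rw [integral_indicator measurableSet_Iio, Measure.restrict_restrict measurableSet_Iio,
        Set.Iio_inter_Ioi]
    rw [h2]
    simp only [nsmul_eq_mul, smul_eq_mul]
    ring
  rw [hradial]
  -- compute the radial integral
  have hval : ∫ r in Set.Ioo (0:ℝ) δ, r / (r ^ 2 + α ^ 2) =
      (1/2) * Real.log (δ ^ 2 + α ^ 2) - Real.log α := by
    rw [← integral_Ioc_eq_integral_Ioo, ← intervalIntegral.integral_of_le hδ.le]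
    have h : ∀ r ∈ Set.uIcc (0:ℝ) δ, HasDerivAt (fun r => (1/2) * Real.log (r ^ 2 + α ^ 2))
        (r / (r ^ 2 + α ^ 2)) r := by
      intro r _
      have h1 : HasDerivAt (fun r : ℝ => r ^ 2 + α ^ 2) (2 * r) r := by
        simpa using ((hasDerivAt_pow 2 r).add_const (α ^ 2))
      have := (h1.log (hpos r).ne').const_mul (1/2 : ℝ)
      exact this.congr_deriv (by ring)
    have hc : Continuous (fun r : ℝ => r / (r ^ 2 + α ^ 2)) :=
      continuous_id.div (by continuity) fun r => (hpos r).ne'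
    rw [intervalIntegral.integral_eq_sub_of_hasDerivAt h (hc.intervalIntegrable _ _)]
    have h0 : (0:ℝ)^2 + α ^ 2 = α ^ 2 := by ring
    rw [h0, Real.log_pow]
    push_cast
    ring
  rw [hval]
  field_simp [Real.pi_ne_zero, hlogα.ne]
  ring

/-- **Two-dimensional form of Case II of the kernel-relaxation lemma.**
For every `δ > 0`, the integral of the kernel
`K(‖y‖, α) = −1 / (2π · log α · (‖y‖² + α²))` over the planar disk of radius `δ`
tends to `1` as `α → 0` within `(0,1)`. -/
theorem kernel_disk_integral_tendsto_one (δ : ℝ) (hδ : 0 < δ) :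
    Tendsto (fun α : ℝ => ∫ y in Metric.ball (0 : EuclideanSpace ℝ (Fin 2)) δ,
        -1 / (2 * Real.pi * Real.log α * (‖y‖ ^ 2 + α ^ 2)))
      (nhdsWithin 0 (Set.Ioo (0 : ℝ) 1)) (nhds 1) := by
  have hEq : ∀ᶠ α in nhdsWithin 0 (Set.Ioo (0 : ℝ) 1),
      (∫ y in Metric.ball (0 : EuclideanSpace ℝ (Fin 2)) δ,
        -1 / (2 * Real.pi * Real.log α * (‖y‖ ^ 2 + α ^ 2))) =
      1 - Real.log (δ ^ 2 + α ^ 2) / (2 * Real.log α) :=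
    eventually_nhdsWithin_of_forall fun α hα => kernel_disk_integral_eq δ α hδ hα
  have hlog : Tendsto (fun α : ℝ => Real.log α) (nhdsWithin 0 (Set.Ioo (0 : ℝ) 1)) atBot :=
    Real.tendsto_log_nhdsGT_zero.mono_left
      (nhdsWithin_mono _ Set.Ioo_subset_Ioi_self)
  have h2log : Tendsto (fun α : ℝ => 2 * Real.log α) (nhdsWithin 0 (Set.Ioo (0 : ℝ) 1)) atBot :=
    hlog.const_mul_atBot two_pos
  have hinv : Tendsto (fun α : ℝ => (2 * Real.log α)⁻¹)
      (nhdsWithin 0 (Set.Ioo (0 : ℝ) 1)) (nhds 0) := by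
    have hneg : Tendsto (fun α : ℝ => -(2 * Real.log α))
        (nhdsWithin 0 (Set.Ioo (0 : ℝ) 1)) atTop := tendsto_neg_atBot_atTop.comp h2log
    have h := hneg.inv_tendsto_atTop.neg
    rw [neg_zero] at h
    refine h.congr fun α => ?_
    simp [inv_neg]
  have hnum : Tendsto (fun α : ℝ => Real.log (δ ^ 2 + α ^ 2))
      (nhdsWithin 0 (Set.Ioo (0 : ℝ) 1)) (nhds (Real.log (δ ^ 2 + 0 ^ 2))) := by
    refine (Real.continuousAt_log ?_).tendsto.comp ?_
    · positivity
    · exact ((continuous_const.add (continuous_pow 2)).tendsto 0).mono_left nhdsWithin_le_nhds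
  have hmain : Tendsto (fun α : ℝ => 1 - Real.log (δ ^ 2 + α ^ 2) / (2 * Real.log α))
      (nhdsWithin 0 (Set.Ioo (0 : ℝ) 1)) (nhds 1) := by
    have h := (tendsto_const_nhds (x := (1:ℝ))).sub ((hnum.mul hinv).congr
      (fun α => (div_eq_mul_inv _ _).symm))
    simpa using h
  exact hmain.congr' (Filter.EventuallyEq.symm hEq)
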